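/- arXiv:2605.24574 — 2 statements merged into one kernel-verified Lean document; each statement's English description precedes it below -/
import Mathlib

section
/- Let n ≥ 1, 1 ≤ p < ∞, and f ∈ L^p(ℍⁿ). Then ‖f + τ_{(u,s)}f‖_{L^p(ℍⁿ)} → 2^{1/p} ‖f‖_{L^p(ℍⁿ)} as |(u,s)| → ∞, where |(u,s)| denotes the Euclidean norm of (u,s) ∈ ℂⁿ × ℝ ≅ ℝ^{2n+1}. -/
open MeasureTheory Real Filter Set
open scoped ENNReal NNReal

noncomputable section

/-- The Heisenberg group ℍⁿ, underlying set ℂⁿ × ℝ. -/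
abbrev Heis (n : ℕ) : Type := (Fin n → ℂ) × ℝ

/-- The Heisenberg group law `(z,t)·(w,s) = (z+w, t+s+(1/2)Im(z·w̄))`. -/
def Hmul {n : ℕ} (x y : Heis n) : Heis n :=
  (x.1 + y.1, x.2 + y.2 + (1 / 2) * (∑ j, x.1 j * (starRingEnd ℂ) (y.1 j)).im)

/-- The Heisenberg group inverse `(z,t)⁻¹ = (-z,-t)`. -/
def Hinv {n : ℕ} (x : Heis n) : Heis n := (-x.1, -x.2)

/-- Laguerre polynomial `L_k^δ(t) = Σ_{j=0}^k (−1)^j binom(k+δ, k−j) t^j/j!` (natural type δ). -/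
def laguerrePoly (k δ : ℕ) (t : ℝ) : ℝ :=
  ∑ j ∈ Finset.range (k + 1),
    (-1 : ℝ) ^ j * (Nat.choose (k + δ) (k - j)) * t ^ j / (Nat.factorial j)

/-- Squared Euclidean norm of `z ∈ ℂⁿ`. -/
def normSqCn {n : ℕ} (z : Fin n → ℂ) : ℝ := ∑ j, Complex.normSq (z j)

/-- The Laguerre function `φ_{k,λ}(z) = L_k^{n−1}((1/2)|λ||z|²) e^{−(1/4)|λ||z|²}` on ℂⁿ. -/
def laguerreFun (n k : ℕ) (lam : ℝ) (z : Fin n → ℂ) : ℝ :=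
  laguerrePoly k (n - 1) ((1 / 2) * |lam| * normSqCn z) *
    Real.exp (-(1 / 4) * |lam| * normSqCn z)

/-- `e_{k,λ}(z,t) = e^{iλt} φ_{k,λ}(z)`. -/
def eFun (n k : ℕ) (lam : ℝ) (x : Heis n) : ℂ :=
  Complex.exp (Complex.I * lam * x.2) * (laguerreFun n k lam x.1 : ℂ)

/-- `c_{n,k} = k!(n−1)!/(k+n−1)!`. -/
def cnk (n k : ℕ) : ℝ :=
  (Nat.factorial k * Nat.factorial (n - 1) : ℝ) / (Nat.factorial (k + n - 1) : ℝ)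

/-- The normalized Strichartz Fourier transform
`F f(λ,k,w) = c_{n,k} ∫_{ℍⁿ} f(z,t) e_{k,λ}((z,t)⁻¹·(w,0)) dz dt`. -/
def SFT (n : ℕ) (f : Heis n → ℂ) (lam : ℝ) (k : ℕ) (w : Fin n → ℂ) : ℂ :=
  (cnk n k : ℂ) * ∫ x : Heis n, f x * eFun n k lam (Hmul (Hinv x) (w, (0 : ℝ)))

/-- The measure ν₂ on the Heisenberg fan `Ω = ℝ × ℕ`:
`dν₂(λ,k) = (2π)^{−2n−1} c_{n,k}^{−2} |λ|^{2n} dλ dcount(k)`. -/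
def nu2 (n : ℕ) : Measure (ℝ × ℕ) :=
  ((volume : Measure ℝ).prod Measure.count).withDensity fun a =>
    ENNReal.ofReal (((2 * π) ^ (2 * n + 1))⁻¹ * ((cnk n a.2) ^ 2)⁻¹ * |a.1| ^ (2 * n))

/-- The measure μ on the Heisenberg fan, `dμ = |λ|^{−n} dν₂`. -/
def muM (n : ℕ) : Measure (ℝ × ℕ) :=
  ((volume : Measure ℝ).prod Measure.count).withDensity fun a =>
    ENNReal.ofReal (((2 * π) ^ (2 * n + 1))⁻¹ * ((cnk n a.2) ^ 2)⁻¹ * |a.1| ^ n)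

/-- The Fourier multiplier operator
`T_m f(z,t) = ∫_Ω ∫_{ℂⁿ} c_{n,k} m(λ,k) F f(λ,k,w) e_{k,λ}((−w,0)·(z,t)) dw dν₂(λ,k)`. -/
def Tm (n : ℕ) (m : ℝ × ℕ → ℂ) (f : Heis n → ℂ) (x : Heis n) : ℂ :=
  ∫ a : ℝ × ℕ,
    (∫ w : Fin n → ℂ,
      (cnk n a.2 : ℂ) * m a * SFT n f a.1 a.2 w * eFun n a.2 a.1 (Hmul (-w, (0 : ℝ)) x))
    ∂(nu2 n)

/-- Left translation `τ_{(u,s)}f(z,t) = f((u,s)⁻¹·(z,t))`. -/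
def tau {n : ℕ} (us : Heis n) (f : Heis n → ℂ) : Heis n → ℂ :=
  fun x => f (Hmul (Hinv us) x)


lemma measurePreserving_HmulInv {n : ℕ} (us : Heis n) :
    MeasurePreserving (fun x : Heis n => Hmul (Hinv us) x)
      (volume : Measure (Heis n)) (volume : Measure (Heis n)) := by
  have h1 : MeasurePreserving (fun z : Fin n → ℂ => -us.1 + z)
      (volume : Measure (Fin n → ℂ)) volume := measurePreserving_add_left volume (-us.1)
  have hcont : Continuous (Function.uncurry fun (z : Fin n → ℂ) (t : ℝ) =>
      -us.2 + t + (1 / 2) * (∑ j, (-us.1 j) * (starRingEnd ℂ) (z j)).im) := by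
    refine (continuous_const.add continuous_snd).add (continuous_const.mul ?_)
    exact Complex.continuous_im.comp <| continuous_finset_sum _ fun j _ =>
      continuous_const.mul (Complex.continuous_conj.comp ((continuous_apply j).comp continuous_fst))
  have h2 := h1.skew_product (μc := (volume : Measure ℝ)) (μd := (volume : Measure ℝ))
    hcont.measurable
    (g := fun (z : Fin n → ℂ) (t : ℝ) =>
      -us.2 + t + (1 / 2) * (∑ j, (-us.1 j) * (starRingEnd ℂ) (z j)).im)
    (by
      refine ae_of_all _ fun z => ?_
      have he : (fun t : ℝ => -us.2 + t + (1 / 2) * (∑ j, (-us.1 j) * (starRingEnd ℂ) (z j)).im)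
          = fun t : ℝ => t + (-us.2 + (1 / 2) * (∑ j, (-us.1 j) * (starRingEnd ℂ) (z j)).im) := by
        funext t; ring
      show Measure.map (fun t : ℝ =>
        -us.2 + t + (1 / 2) * (∑ j, (-us.1 j) * (starRingEnd ℂ) (z j)).im) volume = volume
      rw [he, map_add_right_eq_self])
  have hvol : (volume : Measure (Heis n)) = (volume : Measure (Fin n → ℂ)).prod volume :=
    Measure.volume_eq_prod _ _
  rw [hvol]
  have he2 : (fun x : Heis n => Hmul (Hinv us) x) = fun p : (Fin n → ℂ) × ℝ =>
      (-us.1 + p.1, -us.2 + p.2 + (1 / 2) * (∑ j, (-us.1 j) * (starRingEnd ℂ) (p.1 j)).im) := by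
    funext x; simp [Hmul, Hinv]
  rw [he2]; exact h2

lemma aesm_tau {n : ℕ} (us : Heis n) {f : Heis n → ℂ}
    (hf : AEStronglyMeasurable f (volume : Measure (Heis n))) :
    AEStronglyMeasurable (tau us f) (volume : Measure (Heis n)) :=
  hf.comp_measurePreserving (measurePreserving_HmulInv us)

lemma eLpNorm_tau {n : ℕ} (us : Heis n) {f : Heis n → ℂ} (P : ℝ≥0∞)
    (hf : AEStronglyMeasurable f (volume : Measure (Heis n))) :
    eLpNorm (tau us f) P (volume : Measure (Heis n)) = eLpNorm f P volume :=
  eLpNorm_comp_measurePreserving hf (measurePreserving_HmulInv us)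

lemma support_far {n : ℕ} {g : Heis n → ℂ} (hg : HasCompactSupport g) :
    ∃ C : ℝ, ∀ us : Heis n, C ≤ Real.sqrt (normSqCn us.1 + us.2 ^ 2) →
      ∀ x, g x = 0 ∨ tau us g x = 0 := by
  obtain ⟨R0, hR0⟩ := hg.isBounded.exists_norm_le
  set R : ℝ := max R0 1 with hRdef
  have hR1 : (1 : ℝ) ≤ R := le_max_right _ _
  have hR : ∀ x ∈ tsupport g, ‖x‖ ≤ R := fun x hx => (hR0 x hx).trans (le_max_left _ _)
  set B : ℝ := 4 * n * R ^ 2 + (2 * R + n * R ^ 2) ^ 2 with hBdef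
  refine ⟨Real.sqrt B + 1, fun us hus x => ?_⟩
  by_contra hcon
  push_neg at hcon
  obtain ⟨hgx, hgy⟩ := hcon
  set y : Heis n := Hmul (Hinv us) x with hy
  have hxsupp : x ∈ tsupport g := subset_tsupport g hgx
  have hysupp : y ∈ tsupport g := subset_tsupport g hgy
  have hx1 : ∀ j, ‖x.1 j‖ ≤ R := fun j =>
    (norm_le_pi_norm x.1 j).trans ((norm_fst_le x).trans (hR x hxsupp))
  have hx2 : |x.2| ≤ R := (norm_snd_le x).trans (hR x hxsupp)
  have hy1 : ∀ j, ‖y.1 j‖ ≤ R := fun j =>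
    (norm_le_pi_norm y.1 j).trans ((norm_fst_le y).trans (hR y hysupp))
  have hy2 : |y.2| ≤ R := (norm_snd_le y).trans (hR y hysupp)
  have hu : ∀ j, ‖us.1 j‖ ≤ 2 * R := by
    intro j
    have : us.1 j = x.1 j - y.1 j := by
      have : y.1 = -us.1 + x.1 := rfl
      rw [this]; simp
    rw [this]
    calc ‖x.1 j - y.1 j‖ ≤ ‖x.1 j‖ + ‖y.1 j‖ := norm_sub_le _ _
      _ ≤ 2 * R := by linarith [hx1 j, hy1 j]
  have hnsq : normSqCn us.1 ≤ 4 * n * R ^ 2 := by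
    have : ∀ j, Complex.normSq (us.1 j) ≤ (2 * R) ^ 2 := by
      intro j
      rw [← Complex.sq_norm]
      have := hu j
      nlinarith [norm_nonneg (us.1 j)]
    calc normSqCn us.1 ≤ ∑ _j : Fin n, (2 * R) ^ 2 := Finset.sum_le_sum fun j _ => this j
      _ = n * (2 * R) ^ 2 := by simp [mul_comm]
      _ = 4 * n * R ^ 2 := by ring
  have hs : |us.2| ≤ 2 * R + n * R ^ 2 := by
    have hy2eq : y.2 = -us.2 + x.2 + (1 / 2) * (∑ j, (-us.1 j) * (starRingEnd ℂ) (x.1 j)).im := rfl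
    have hSim : |(∑ j, (-us.1 j) * (starRingEnd ℂ) (x.1 j)).im| ≤ n * (2 * R * R) := by
      calc |(∑ j, (-us.1 j) * (starRingEnd ℂ) (x.1 j)).im|
          ≤ ‖∑ j, (-us.1 j) * (starRingEnd ℂ) (x.1 j)‖ :=
            Complex.abs_im_le_norm _
        _ ≤ ∑ j, ‖(-us.1 j) * (starRingEnd ℂ) (x.1 j)‖ :=
            norm_sum_le _ _
        _ ≤ ∑ _j : Fin n, 2 * R * R := by
            refine Finset.sum_le_sum fun j _ => ?_
            rw [norm_mul]
            have h1 : ‖-us.1 j‖ ≤ 2 * R := by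
              rw [norm_neg]; exact hu j
            have h2 : ‖(starRingEnd ℂ) (x.1 j)‖ ≤ R := by
              rw [Complex.norm_conj]; exact hx1 j
            exact mul_le_mul h1 h2 (norm_nonneg _) (by linarith)
        _ = n * (2 * R * R) := by simp [mul_comm]
    have : us.2 = x.2 - y.2 + (1 / 2) * (∑ j, (-us.1 j) * (starRingEnd ℂ) (x.1 j)).im := by
      rw [hy2eq]; ring
    rw [this]
    calc |x.2 - y.2 + (1 / 2) * (∑ j, (-us.1 j) * (starRingEnd ℂ) (x.1 j)).im|
        ≤ |x.2 - y.2| + |(1 / 2) * (∑ j, (-us.1 j) * (starRingEnd ℂ) (x.1 j)).im| := abs_add_le _ _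
      _ ≤ (|x.2| + |y.2|) + (1 / 2) * |(∑ j, (-us.1 j) * (starRingEnd ℂ) (x.1 j)).im| := by
          rw [abs_mul]
          gcongr
          · exact abs_sub _ _
          · rw [abs_of_pos]; norm_num
      _ ≤ (R + R) + (1 / 2) * (n * (2 * R * R)) := by
          gcongr
      _ = 2 * R + n * R ^ 2 := by ring
  have hB : normSqCn us.1 + us.2 ^ 2 ≤ B := by
    have h2 : us.2 ^ 2 ≤ (2 * R + n * R ^ 2) ^ 2 := by
      have h0 : (0:ℝ) ≤ 2 * R + n * R ^ 2 := by positivity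
      nlinarith [abs_nonneg us.2, sq_abs us.2]
    rw [hBdef]; linarith
  have hle : Real.sqrt (normSqCn us.1 + us.2 ^ 2) ≤ Real.sqrt B := Real.sqrt_le_sqrt hB
  linarith [hus, hle]

lemma eLpNorm_add_disjoint {α : Type*} [MeasurableSpace α] {μ : Measure α} {g h : α → ℂ}
    {p : ℝ} (hp : 1 ≤ p) (hg : AEStronglyMeasurable g μ) (hh : AEStronglyMeasurable h μ)
    (hd : ∀ x, g x = 0 ∨ h x = 0) :
    eLpNorm (fun x => g x + h x) (ENNReal.ofReal p) μ =
      (eLpNorm g (ENNReal.ofReal p) μ ^ p + eLpNorm h (ENNReal.ofReal p) μ ^ p) ^ (1 / p) := by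
  have hp0 : 0 < p := lt_of_lt_of_le zero_lt_one hp
  have hP0 : ENNReal.ofReal p ≠ 0 := (ENNReal.ofReal_pos.mpr hp0).ne'
  have hPt : ENNReal.ofReal p ≠ ∞ := ENNReal.ofReal_ne_top
  have htR : (ENNReal.ofReal p).toReal = p := ENNReal.toReal_ofReal hp0.le
  rw [eLpNorm_eq_lintegral_rpow_enorm_toReal hP0 hPt, eLpNorm_eq_lintegral_rpow_enorm_toReal hP0 hPt,
    eLpNorm_eq_lintegral_rpow_enorm_toReal hP0 hPt, htR, ← ENNReal.rpow_mul, ← ENNReal.rpow_mul,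
    one_div_mul_cancel hp0.ne', ENNReal.rpow_one, ENNReal.rpow_one]
  congr 1
  have hpt : ∀ x, (‖g x + h x‖ₑ) ^ p
      = ‖g x‖ₑ ^ p + ‖h x‖ₑ ^ p := by
    intro x
    rcases hd x with h0 | h0 <;>
      simp [h0, ENNReal.zero_rpow_of_pos hp0]
  rw [lintegral_congr hpt]
  exact lintegral_add_left' (ENNReal.continuous_rpow_const.measurable.comp_aemeasurable
    hg.enorm) _

/-- `‖f + τ_{(u,s)}f‖_p → 2^{1/p} ‖f‖_p` as the Euclidean norm of `(u,s)` tends to infinity. -/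
theorem translate_norm_limit (n : ℕ) (hn : 1 ≤ n) (p : ℝ) (hp : 1 ≤ p)
    (f : Heis n → ℂ) (hf : MemLp f (ENNReal.ofReal p) (volume : Measure (Heis n))) :
    Tendsto
      (fun us : Heis n =>
        eLpNorm (fun x => f x + tau us f x) (ENNReal.ofReal p) (volume : Measure (Heis n)))
      (comap (fun us : Heis n => Real.sqrt (normSqCn us.1 + us.2 ^ 2)) atTop)
      (nhds (ENNReal.ofReal ((2 : ℝ) ^ (1 / p)) *
        eLpNorm f (ENNReal.ofReal p) (volume : Measure (Heis n)))) := by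
  have hp0 : 0 < p := lt_of_lt_of_le zero_lt_one hp
  set P := ENNReal.ofReal p with hPdef
  have hP0 : P ≠ 0 := (ENNReal.ofReal_pos.mpr hp0).ne'
  have hPt : P ≠ ∞ := ENNReal.ofReal_ne_top
  have hP1 : 1 ≤ P := by
    rw [hPdef, ← ENNReal.ofReal_one]; exact ENNReal.ofReal_le_ofReal hp
  set c : ℝ≥0∞ := ENNReal.ofReal ((2 : ℝ) ^ (1 / p)) with hcdef
  have hc2 : c ≤ 2 := by
    have : ((2 : ℝ) ^ (1 / p)) ≤ 2 := by
      calc (2 : ℝ) ^ (1 / p) ≤ (2 : ℝ) ^ (1 : ℝ) :=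
        Real.rpow_le_rpow_of_exponent_le one_le_two (by rw [div_le_one hp0]; exact hp)
      _ = 2 := Real.rpow_one 2
    calc c ≤ ENNReal.ofReal 2 := ENNReal.ofReal_le_ofReal this
      _ = 2 := by norm_num
  set F := eLpNorm f P (volume : Measure (Heis n)) with hFdef
  set L := c * F with hLdef
  have hL : L ≠ ∞ := ENNReal.mul_ne_top ENNReal.ofReal_ne_top hf.eLpNorm_ne_top
  rw [ENNReal.tendsto_nhds hL]
  intro ε hε
  set η : ℝ≥0∞ := min ε 1 with hηdef
  have hη0 : η ≠ 0 := (lt_min hε zero_lt_one).ne'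
  have hη4 : η / 4 ≠ 0 := by
    simp only [ne_eq, ENNReal.div_eq_zero_iff, not_or]
    exact ⟨hη0, by norm_num⟩
  obtain ⟨g, hgsupp, hfg, hgcont, hgmem⟩ :=
    hf.exists_hasCompactSupport_eLpNorm_sub_le hPt hη4
  obtain ⟨C, hC⟩ := support_far hgsupp
  filter_upwards [tendsto_comap.eventually (eventually_ge_atTop C)] with us hus
  have hdis : ∀ x, g x = 0 ∨ tau us g x = 0 := hC us hus
  set δ : ℝ≥0∞ := η / 4 with hδdef
  have hfm := hf.aestronglyMeasurable
  have hgm : AEStronglyMeasurable g (volume : Measure (Heis n)) := hgcont.aestronglyMeasurable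
  have hfgm : AEStronglyMeasurable (f - g) (volume : Measure (Heis n)) := hfm.sub hgm
  have hgfm : AEStronglyMeasurable (g - f) (volume : Measure (Heis n)) := hgm.sub hfm
  have hτf := aesm_tau us hfm
  have hτg := aesm_tau us hgm
  have hτfg := aesm_tau us hfgm
  have hτgf := aesm_tau us hgfm
  set A := eLpNorm g P (volume : Measure (Heis n)) with hAdef
  set N := eLpNorm (fun x => f x + tau us f x) P (volume : Measure (Heis n)) with hNdef
  have hgf : eLpNorm (g - f) P (volume : Measure (Heis n)) ≤ δ := by
    rw [eLpNorm_sub_comm]; exact hfg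
  -- norm of g + tau g
  have hGT : eLpNorm (fun x => g x + tau us g x) P (volume : Measure (Heis n)) = c * A := by
    rw [hPdef, eLpNorm_add_disjoint hp hgm hτg hdis]
    rw [show eLpNorm (tau us g) (ENNReal.ofReal p) volume = A from eLpNorm_tau us _ hgm]
    rw [show eLpNorm g (ENNReal.ofReal p) volume = A from rfl]
    rw [← two_mul, ENNReal.mul_rpow_of_nonneg _ _ (by positivity : (0:ℝ) ≤ 1 / p),
      ← ENNReal.rpow_mul, mul_one_div_cancel hp0.ne', ENNReal.rpow_one]
    congr 1
    show (2 : ℝ≥0∞) ^ (1 / p) = ENNReal.ofReal ((2 : ℝ) ^ (1 / p))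
    rw [← ENNReal.ofReal_rpow_of_pos (by norm_num : (0:ℝ) < 2)]
    norm_num
  -- triangle bounds
  have hsub1 : eLpNorm (fun x => (f - g) x + tau us (f - g) x) P
      (volume : Measure (Heis n)) ≤ δ + δ := by
    refine (eLpNorm_add_le hfgm hτfg hP1).trans ?_
    have := eLpNorm_tau us P hfgm
    rw [this]
    exact add_le_add hfg hfg
  have hsub2 : eLpNorm (fun x => (g - f) x + tau us (g - f) x) P
      (volume : Measure (Heis n)) ≤ δ + δ := by
    refine (eLpNorm_add_le hgfm hτgf hP1).trans ?_
    have := eLpNorm_tau us P hgfm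
    rw [this]
    exact add_le_add hgf hgf
  have h1 : N ≤ c * A + (δ + δ) := by
    have key1 : (fun x => f x + tau us f x)
        = fun x => (g x + tau us g x) + ((f - g) x + tau us (f - g) x) := by
      funext x; simp only [tau, Pi.sub_apply]; ring
    calc N = eLpNorm (fun x => (g x + tau us g x) + ((f - g) x + tau us (f - g) x)) P
          (volume : Measure (Heis n)) := by rw [hNdef, key1]
      _ ≤ eLpNorm (fun x => g x + tau us g x) P (volume : Measure (Heis n))
          + eLpNorm (fun x => (f - g) x + tau us (f - g) x) P (volume : Measure (Heis n)) :=
        eLpNorm_add_le (hgm.add hτg) (hfgm.add hτfg) hP1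
      _ ≤ c * A + (δ + δ) := add_le_add hGT.le hsub1
  have h2 : c * A ≤ N + (δ + δ) := by
    have key2 : (fun x => g x + tau us g x)
        = fun x => (f x + tau us f x) + ((g - f) x + tau us (g - f) x) := by
      funext x; simp only [tau, Pi.sub_apply]; ring
    calc c * A = eLpNorm (fun x => (f x + tau us f x) + ((g - f) x + tau us (g - f) x)) P
          (volume : Measure (Heis n)) := by rw [← hGT, key2]
      _ ≤ N + eLpNorm (fun x => (g - f) x + tau us (g - f) x) P (volume : Measure (Heis n)) :=
        eLpNorm_add_le (hfm.add hτf) (hgfm.add hτgf) hP1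
      _ ≤ N + (δ + δ) := add_le_add_right hsub2 _
  have hA : A ≤ F + δ := by
    have : g = f + (g - f) := by ring
    calc A = eLpNorm (f + (g - f)) P (volume : Measure (Heis n)) := by rw [← this]
      _ ≤ F + eLpNorm (g - f) P (volume : Measure (Heis n)) := eLpNorm_add_le hfm hgfm hP1
      _ ≤ F + δ := add_le_add_right hgf _
  have hF : F ≤ A + δ := by
    have : f = g + (f - g) := by ring
    calc F = eLpNorm (g + (f - g)) P (volume : Measure (Heis n)) := by rw [← this]
      _ ≤ A + eLpNorm (f - g) P (volume : Measure (Heis n)) := eLpNorm_add_le hgm hfgm hP1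
      _ ≤ A + δ := add_le_add_right hfg _
  have h4δ : δ + δ + (δ + δ) ≤ ε := by
    have : δ + δ + (δ + δ) = 4 * (η / 4) := by rw [hδdef]; ring
    rw [this, ENNReal.mul_div_cancel' (by norm_num) (by norm_num)]
    exact min_le_left _ _
  have hcδ : c * δ ≤ δ + δ := by
    calc c * δ ≤ 2 * δ := mul_le_mul_left hc2 δ
      _ = δ + δ := two_mul δ
  constructor
  · -- L - ε ≤ N
    rw [tsub_le_iff_right]
    calc L = c * F := hLdef
      _ ≤ c * (A + δ) := mul_le_mul_right hF c
      _ = c * A + c * δ := mul_add c A δ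
      _ ≤ (N + (δ + δ)) + (δ + δ) := add_le_add h2 hcδ
      _ = N + (δ + δ + (δ + δ)) := by ring
      _ ≤ N + ε := add_le_add_right h4δ _
  · -- N ≤ L + ε
    calc N ≤ c * A + (δ + δ) := h1
      _ ≤ c * (F + δ) + (δ + δ) := add_le_add_left (mul_le_mul_right hA c) _
      _ = c * F + (c * δ + (δ + δ)) := by ring
      _ ≤ c * F + ((δ + δ) + (δ + δ)) := add_le_add_right (add_le_add_left hcδ _) _
      _ ≤ L + ε := by rw [hLdef]; exact add_le_add_right h4δ _


end
end

section
/- Let n ≥ 1 and f ∈ L¹(ℍⁿ). Then for every (λ,k) ∈ Ω, |λ|^{n/2} ( ∫_{ℂⁿ} |F f(λ,k,w)|² dw )^{1/2} ≤ (2π)^{n/2} ‖f‖_{L¹(ℍⁿ)}. -/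
open MeasureTheory Real Filter Set
open scoped ENNReal NNReal

noncomputable section

section StrichartzAux
open Finset

/-- finite difference of binomial coefficients -/
theorem altsum (a : ℕ) : ∀ (k r : ℕ),
    ∑ b ∈ range (k+1), (-1:ℤ)^b * (k.choose b) * ((r+b).choose a)
      = (-1)^k * (if k ≤ a then ((r.choose (a-k) : ℤ)) else 0) := by
  intro k
  induction k with
  | zero => intro r; simp
  | succ k ih =>
    intro r
    have e1 : ∑ b ∈ range (k+2), (-1:ℤ)^b * ((k+1).choose b) * ((r+b).choose a)
        = (∑ b ∈ range (k+1), (-1:ℤ)^b * (k.choose b) * ((r+b).choose a))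
          - ∑ b ∈ range (k+1), (-1:ℤ)^b * (k.choose b) * ((r+1+b).choose a) := by
      rw [Finset.sum_range_succ' _ (k+1)]
      have e2 : ∀ b ∈ range (k+1), (-1:ℤ)^(b+1) * ((k+1).choose (b+1)) * ((r+(b+1)).choose a)
          = -((-1:ℤ)^b * (k.choose b) * ((r+1+b).choose a))
            + (-1:ℤ)^(b+1) * (k.choose (b+1)) * ((r+(b+1)).choose a) := by
        intro b _
        rw [Nat.choose_succ_succ]
        push_cast
        have : r + (b+1) = r + 1 + b := by ring
        rw [this]; ring
      rw [Finset.sum_congr rfl e2, Finset.sum_add_distrib]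
      have e3 : ∑ b ∈ range (k+1), (-1:ℤ)^(b+1) * (k.choose (b+1)) * ((r+(b+1)).choose a)
          = ∑ b ∈ range (k+2), (-1:ℤ)^b * (k.choose b) * ((r+b).choose a)
            - (-1:ℤ)^0 * (k.choose 0) * ((r+0).choose a) := by
        rw [Finset.sum_range_succ' (fun b => (-1:ℤ)^b * (k.choose b) * ((r+b).choose a)) (k+1)]
        ring
      rw [e3, Finset.sum_range_succ _ (k+1), Nat.choose_succ_self]
      push_cast
      simp only [Nat.choose_zero_right, Nat.cast_one, Finset.sum_neg_distrib]
      ring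
    rw [e1, ih r, ih (r+1)]
    rcases lt_trichotomy (k+1) a with h | h | h
    · have h1 : k ≤ a := by omega
      have h2 : k + 1 ≤ a := by omega
      simp only [if_pos h1, if_pos h2]
      have h3 : a - k = (a - (k+1)) + 1 := by omega
      have h4 : (r+1).choose ((a-(k+1))+1) = r.choose (a-(k+1)) + r.choose ((a-(k+1))+1) :=
        Nat.choose_succ_succ r (a-(k+1))
      rw [h3, h4]
      push_cast
      ring
    · have h1 : k ≤ a := by omega
      simp only [if_pos h1, if_pos (by omega : k+1 ≤ a)]
      have h3 : a - k = 1 := by omega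
      have h4 : a - (k+1) = 0 := by omega
      rw [h3, h4]
      simp only [Nat.choose_one_right, Nat.choose_zero_right, if_pos (by omega : k+1 ≤ a)]
      push_cast; ring
    · by_cases h1 : k ≤ a
      · have : a = k := by omega
        subst this
        simp only [if_pos le_rfl, if_neg (by omega : ¬ a + 1 ≤ a), Nat.sub_self]
        simp
      · simp only [if_neg h1, if_neg (by omega : ¬ k+1 ≤ a)]
        ring

theorem term_eq (k δ a b : ℕ) (hb : b ≤ k) :
    (-1:ℝ)^b * ((k+δ).choose (k-b)) * (a+b+δ).factorial / b.factorial
      = ((k+δ).factorial * a.factorial / k.factorial) *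
        ((-1:ℝ)^b * (k.choose b) * (((a+δ)+b).choose a)) := by
  have h1 : (b.factorial : ℝ) ≠ 0 := Nat.cast_ne_zero.2 (Nat.factorial_ne_zero b)
  have h2 : (k.factorial : ℝ) ≠ 0 := Nat.cast_ne_zero.2 (Nat.factorial_ne_zero k)
  have h3 : ((k-b).factorial : ℝ) ≠ 0 := Nat.cast_ne_zero.2 (Nat.factorial_ne_zero _)
  have h4 : ((δ+b).factorial : ℝ) ≠ 0 := Nat.cast_ne_zero.2 (Nat.factorial_ne_zero _)
  have h5 : ((a).factorial : ℝ) ≠ 0 := Nat.cast_ne_zero.2 (Nat.factorial_ne_zero _)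
  rw [Nat.cast_choose ℝ (show k-b ≤ k+δ by omega), Nat.cast_choose ℝ hb,
    Nat.cast_choose ℝ (show a ≤ (a+δ)+b by omega)]
  rw [show (k+δ)-(k-b) = δ+b by omega, show ((a+δ)+b)-a = δ+b by omega,
    show (a+δ)+b = a+b+δ by omega]
  field_simp

theorem innerSumL (k δ a : ℕ) (ha : a ≤ k) :
    ∑ b ∈ range (k+1), (-1:ℝ)^b * ((k+δ).choose (k-b)) * (a+b+δ).factorial / b.factorial
      = ((k+δ).factorial * a.factorial / k.factorial) *
        ((-1:ℝ)^k * (if k ≤ a then (((a+δ).choose (a-k) : ℝ)) else 0)) := by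
  have e1 : ∀ b ∈ range (k+1),
      (-1:ℝ)^b * ((k+δ).choose (k-b)) * (a+b+δ).factorial / b.factorial
        = ((k+δ).factorial * a.factorial / k.factorial) *
          ((-1:ℝ)^b * (k.choose b) * (((a+δ)+b).choose a)) := by
    intro b hb
    exact term_eq k δ a b (by simpa using Nat.lt_succ_iff.mp (Finset.mem_range.mp hb))
  rw [Finset.sum_congr rfl e1, ← Finset.mul_sum]
  congr 1
  have h := altsum a k (a+δ)
  have h' : ∑ b ∈ range (k+1), (-1:ℝ)^b * (k.choose b) * (((a+δ)+b).choose a)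
      = (-1:ℝ)^k * (if k ≤ a then (((a+δ).choose (a-k) : ℝ)) else 0) := by
    have h2 := congrArg (fun z : ℤ => (z : ℝ)) h
    simp only [Int.cast_sum, Int.cast_mul, Int.cast_pow, Int.cast_neg, Int.cast_one,
      Int.cast_natCast, apply_ite (fun z : ℤ => (z : ℝ)), Int.cast_zero] at h2
    exact h2
  exact h'

theorem comb (k δ : ℕ) :
    ∑ a ∈ range (k+1), ∑ b ∈ range (k+1),
      (((-1:ℝ)^a * ((k+δ).choose (k-a)) / a.factorial) *
       ((-1:ℝ)^b * ((k+δ).choose (k-b)) / b.factorial)) * (a+b+δ).factorial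
      = (k+δ).factorial / k.factorial := by
  have e1 : ∀ a ∈ range (k+1),
      ∑ b ∈ range (k+1),
        (((-1:ℝ)^a * ((k+δ).choose (k-a)) / a.factorial) *
         ((-1:ℝ)^b * ((k+δ).choose (k-b)) / b.factorial)) * (a+b+δ).factorial
      = ((-1:ℝ)^a * ((k+δ).choose (k-a)) / a.factorial) *
        (((k+δ).factorial * a.factorial / k.factorial) *
          ((-1:ℝ)^k * (if k ≤ a then (((a+δ).choose (a-k) : ℝ)) else 0))) := by
    intro a ha
    rw [← innerSumL k δ a (by simpa using Nat.lt_succ_iff.mp (Finset.mem_range.mp ha)),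
      Finset.mul_sum]
    refine Finset.sum_congr rfl fun b _ => ?_
    ring
  rw [Finset.sum_congr rfl e1]
  rw [Finset.sum_eq_single_of_mem k (Finset.self_mem_range_succ k)]
  · have hk : (k.factorial : ℝ) ≠ 0 := Nat.cast_ne_zero.2 (Nat.factorial_ne_zero k)
    simp only [Nat.sub_self, Nat.choose_zero_right, if_pos (le_refl k)]
    push_cast
    field_simp
    have hsq : ((-1:ℝ)^k)*((-1:ℝ)^k) = 1 := by
      rw [← pow_add, ← two_mul, pow_mul]; norm_num
    linear_combination hsq
  · intro a ha hne
    have : ¬ k ≤ a := by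
      rcases Finset.mem_range.mp ha with h
      omega
    simp [this]

theorem hstick (n m : ℕ) (hn : 1 ≤ n) :
    ∑ i ∈ range (m+1), ((i+(n-1)).choose (n-1)) = (m+n).choose n := by
  have h := Nat.sum_Icc_choose (m+n-1) (n-1)
  have h2 : ∑ i ∈ range (m+1), ((i+(n-1)).choose (n-1))
      = ∑ t ∈ Finset.Icc (n-1) (m+n-1), t.choose (n-1) := by
    refine Finset.sum_nbij' (fun i => i + (n-1)) (fun t => t - (n-1)) ?_ ?_ ?_ ?_ ?_ <;>
      intro a ha <;> simp only [Finset.mem_range, Finset.mem_Icc] at * <;> omega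
  rw [h2, h, show m+n-1+1 = m+n by omega, show n-1+1 = n by omega]

theorem realstick (n m : ℕ) (hn : 1 ≤ n) :
    ∑ i ∈ range (m+1),
      ((m.choose i : ℝ) * i.factorial * ((m-i+n-1).factorial / (n-1).factorial))
      = (m+n).factorial / n.factorial := by
  have e1 : ∀ i ∈ range (m+1),
      ((m.choose i : ℝ) * i.factorial * ((m-i+n-1).factorial / (n-1).factorial))
        = (m.factorial : ℝ) * ((m-i+n-1).choose (n-1)) := by
    intro i hi
    have him : i ≤ m := Nat.lt_succ_iff.mp (Finset.mem_range.mp hi)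
    have h2 : ((m-i).factorial : ℝ) ≠ 0 := Nat.cast_ne_zero.2 (Nat.factorial_ne_zero _)
    have h3 : ((n-1).factorial : ℝ) ≠ 0 := Nat.cast_ne_zero.2 (Nat.factorial_ne_zero _)
    have h4 : ((i).factorial : ℝ) ≠ 0 := Nat.cast_ne_zero.2 (Nat.factorial_ne_zero _)
    rw [Nat.cast_choose ℝ him, Nat.cast_choose ℝ (show n-1 ≤ m-i+n-1 by omega),
      show m-i+n-1-(n-1) = m-i by omega]
    field_simp
  rw [Finset.sum_congr rfl e1, ← Finset.mul_sum]
  have e2 : ∑ i ∈ range (m+1), (((m-i+n-1).choose (n-1)) : ℝ)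
      = ∑ i ∈ range (m+1), (((i+(n-1)).choose (n-1)) : ℝ) := by
    rw [← Finset.sum_range_reflect]
    refine Finset.sum_congr rfl fun i hi => ?_
    have him : i ≤ m := Nat.lt_succ_iff.mp (Finset.mem_range.mp hi)
    rw [show m-(m+1-1-i)+n-1 = i+(n-1) by omega]
  rw [e2]
  have e3 : ∑ i ∈ range (m+1), (((i+(n-1)).choose (n-1)) : ℝ) = ((m+n).choose n : ℝ) := by
    exact_mod_cast congrArg (fun t : ℕ => (t : ℝ)) (hstick n m hn)
  rw [e3, Nat.cast_choose ℝ (show n ≤ m+n by omega), show m+n-n = m by omega]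
  have h2 : ((m).factorial : ℝ) ≠ 0 := Nat.cast_ne_zero.2 (Nat.factorial_ne_zero _)
  have h3 : ((n).factorial : ℝ) ≠ 0 := Nat.cast_ne_zero.2 (Nat.factorial_ne_zero _)
  field_simp

/-- moment integral over ℂ -/
theorem intC_val (m : ℕ) {α : ℝ} (hα : 0 < α) :
    ∫ z : ℂ, Complex.normSq z ^ m * Real.exp (-α * Complex.normSq z)
      = π * m.factorial / α ^ (m+1) := by
  have hm : (0:ℝ) ≤ 2*m := by positivity
  have h := Complex.integral_rpow_mul_exp_neg_mul_rpow (p := 2) (q := 2*m)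
    (by norm_num) (by linarith) hα
  have e1 : ∀ z : ℂ, Complex.normSq z ^ m * Real.exp (-α * Complex.normSq z)
      = ‖z‖ ^ ((2*m : ℕ) : ℝ) * Real.exp (-α * ‖z‖ ^ (2:ℝ)) := by
    intro z
    rw [Real.rpow_natCast, Real.rpow_two, Complex.normSq_eq_norm_sq,
      pow_mul]
  rw [show ((2:ℝ)*m) = ((2*m : ℕ) : ℝ) by push_cast; ring] at h
  simp_rw [e1]
  rw [show (fun z : ℂ => ‖z‖ ^ ((2*m : ℕ) : ℝ) * Real.exp (-α * ‖z‖ ^ (2:ℝ)))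
    = fun z : ℂ => ‖z‖ ^ ((2*m : ℕ) : ℝ) * Real.exp (-α * ‖z‖ ^ (2:ℝ)) from rfl]
  rw [h]
  have h2 : (((2*m : ℕ) : ℝ) + 2) / 2 = (m + 1 : ℕ) := by push_cast; ring
  rw [h2, show ((m+1:ℕ):ℝ) = (m:ℝ)+1 by push_cast; ring, Real.Gamma_nat_eq_factorial,
    show (-(((2*m : ℕ):ℝ) + 2) / 2) = -((m+1 : ℕ) : ℝ) by push_cast; ring]
  rw [Real.rpow_neg hα.le, Real.rpow_natCast]
  field_simp

/-- integrability of moment integrand over ℂ -/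
theorem intC_int (m : ℕ) {α : ℝ} (hα : 0 < α) :
    Integrable (fun z : ℂ => Complex.normSq z ^ m * Real.exp (-α * Complex.normSq z)) := by
  have key : Integrable (fun p : ℝ × ℝ =>
      (p.1^2 + p.2^2) ^ m * Real.exp (-α * (p.1^2 + p.2^2))) := by
    have e1 : (fun p : ℝ × ℝ => (p.1^2 + p.2^2) ^ m * Real.exp (-α * (p.1^2 + p.2^2)))
        = fun p : ℝ × ℝ => ∑ i ∈ Finset.range (m+1),
            ((p.1^2)^i * Real.exp (-α * p.1^2)) *
            (((p.2^2)^(m-i) * Real.exp (-α * p.2^2)) * (m.choose i)) := by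
      funext p
      rw [add_pow]
      rw [Finset.sum_mul]
      refine Finset.sum_congr rfl fun i _ => ?_
      rw [show -α * (p.1^2 + p.2^2) = -α * p.1^2 + -α * p.2^2 by ring, Real.exp_add]
      ring
    rw [e1]
    refine integrable_finset_sum _ fun i _ => ?_
    have h1 : Integrable (fun x : ℝ => (x^2)^i * Real.exp (-α * x^2)) := by
      have := integrable_rpow_mul_exp_neg_mul_sq hα (s := ((2*i : ℕ) : ℝ))
        (lt_of_lt_of_le (show (-1:ℝ) < 0 by norm_num) (by positivity))
      simp_rw [Real.rpow_natCast] at this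
      refine this.congr (Filter.Eventually.of_forall fun x => ?_)
      simp [pow_mul]
    have h2 : Integrable (fun x : ℝ => ((x^2)^(m-i) * Real.exp (-α * x^2)) * (m.choose i)) := by
      refine Integrable.mul_const ?_ _
      have := integrable_rpow_mul_exp_neg_mul_sq hα (s := ((2*(m-i) : ℕ) : ℝ))
        (lt_of_lt_of_le (show (-1:ℝ) < 0 by norm_num) (by positivity))
      simp_rw [Real.rpow_natCast] at this
      refine this.congr (Filter.Eventually.of_forall fun x => ?_)
      simp [pow_mul]
    exact h1.mul_prod h2
  have hmp := Complex.volume_preserving_equiv_real_prod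
  rw [← hmp.integrable_comp_emb Complex.measurableEquivRealProd.measurableEmbedding] at key
  refine key.congr ?_
  refine Filter.Eventually.of_forall fun z => ?_
  simp only [Function.comp_apply, Complex.measurableEquivRealProd_apply]
  rw [Complex.normSq_apply]
  ring_nf

theorem intCn (α : ℝ) (hα : 0 < α) : ∀ (n m : ℕ),
    Integrable (fun z : Fin n → ℂ =>
      (∑ j, Complex.normSq (z j)) ^ m * Real.exp (-α * ∑ j, Complex.normSq (z j)))
    ∧ (1 ≤ n → ∫ z : Fin n → ℂ,
        (∑ j, Complex.normSq (z j)) ^ m * Real.exp (-α * ∑ j, Complex.normSq (z j))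
        = π ^ n / α ^ (n+m) * ((m+n-1).factorial / (n-1).factorial)) := by
  intro n
  induction n with
  | zero =>
    intro m
    constructor
    · have : (fun z : Fin 0 → ℂ =>
          (∑ j, Complex.normSq (z j)) ^ m * Real.exp (-α * ∑ j, Complex.normSq (z j)))
          = fun _ => (0:ℝ) ^ m * Real.exp 0 := by
        funext z
        simp
      rw [this]
      refine integrable_const_iff.mpr (Or.inr ?_)
      refine ⟨?_⟩; rw [volume_pi, Measure.pi_empty_univ]
      exact ENNReal.one_lt_top
    · intro h; exact absurd h (by omega)
  | succ n ih =>
    intro m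
    -- expansion of the integrand on the product space
    have hexp : ∀ a b : ℝ, (a+b)^m * Real.exp (-α*(a+b))
        = ∑ i ∈ range (m+1),
            ((a^i * Real.exp (-α*a)) * (m.choose i)) * (b^(m-i) * Real.exp (-α*b)) := by
      intro a b
      rw [add_pow, Finset.sum_mul]
      refine Finset.sum_congr rfl fun i _ => ?_
      rw [show -α * (a+b) = -α*a + -α*b by ring, Real.exp_add]
      ring
    have hint : ∀ i, Integrable (fun p : ℂ × (Fin n → ℂ) =>
        ((Complex.normSq p.1 ^ i * Real.exp (-α * Complex.normSq p.1)) * (m.choose i)) *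
        ((∑ j, Complex.normSq (p.2 j)) ^ (m-i) *
          Real.exp (-α * ∑ j, Complex.normSq (p.2 j)))) := by
      intro i
      exact ((intC_int i hα).mul_const _).mul_prod ((ih (m-i)).1)
    have hintG : Integrable (fun p : ℂ × (Fin n → ℂ) =>
        (Complex.normSq p.1 + ∑ j, Complex.normSq (p.2 j)) ^ m *
          Real.exp (-α * (Complex.normSq p.1 + ∑ j, Complex.normSq (p.2 j)))) := by
      have := integrable_finset_sum (range (m+1)) (fun i _ => hint i)
      refine this.congr (Filter.Eventually.of_forall fun p => ?_)
      exact (hexp (Complex.normSq p.1) (∑ j, Complex.normSq (p.2 j))).symm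
    have hsum : ∀ (z : ℂ) (x : Fin n → ℂ),
        ∑ j, Complex.normSq ((Fin.cons z x : Fin (n+1) → ℂ) j)
          = Complex.normSq z + ∑ j, Complex.normSq (x j) := by
      intro z x
      rw [Fin.sum_univ_succ]
      simp
    have hmp := (measurePreserving_piFinSuccAbove
      (fun _ : Fin (n+1) => (volume : Measure ℂ)) 0).symm
    have hcomp : ∀ p : ℂ × (Fin n → ℂ),
        (fun z : Fin (n+1) → ℂ => (∑ j, Complex.normSq (z j)) ^ m *
            Real.exp (-α * ∑ j, Complex.normSq (z j)))
          ((MeasurableEquiv.piFinSuccAbove (fun _ : Fin (n+1) => ℂ) 0).symm p)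
        = (Complex.normSq p.1 + ∑ j, Complex.normSq (p.2 j)) ^ m *
            Real.exp (-α * (Complex.normSq p.1 + ∑ j, Complex.normSq (p.2 j))) := by
      intro p
      simp only [MeasurableEquiv.piFinSuccAbove_symm_apply, Fin.insertNthEquiv,
        Equiv.coe_fn_mk, Fin.insertNth_zero, Fin.zero_succAbove, cast_eq]
      rw [hsum p.1 p.2]
    constructor
    · rw [show (volume : Measure (Fin (n+1) → ℂ)) = Measure.pi (fun _ => volume) from volume_pi]
      rw [← hmp.integrable_comp_emb
        (MeasurableEquiv.piFinSuccAbove (fun _ : Fin (n+1) => ℂ) 0).symm.measurableEmbedding]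
      refine hintG.congr (Filter.Eventually.of_forall fun p => ?_)
      exact (hcomp p).symm
    · intro _
      rw [show (volume : Measure (Fin (n+1) → ℂ)) = Measure.pi (fun _ => volume) from volume_pi,
        ← hmp.integral_comp']
      rw [show ((volume : Measure ℂ).prod (Measure.pi fun _ : Fin n => (volume : Measure ℂ)))
        = (volume : Measure (ℂ × (Fin n → ℂ))) by rw [← volume_pi, ← Measure.volume_eq_prod]]
      simp_rw [hcomp, hexp]
      rw [integral_finset_sum _ (fun i _ => hint i)]
      have hval : ∀ i ∈ range (m+1),
          ∫ p : ℂ × (Fin n → ℂ),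
            ((Complex.normSq p.1 ^ i * Real.exp (-α * Complex.normSq p.1)) * (m.choose i)) *
            ((∑ j, Complex.normSq (p.2 j)) ^ (m-i) *
              Real.exp (-α * ∑ j, Complex.normSq (p.2 j)))
          = (π * i.factorial / α ^ (i+1) * (m.choose i)) *
            ∫ x : Fin n → ℂ, (∑ j, Complex.normSq (x j)) ^ (m-i) *
              Real.exp (-α * ∑ j, Complex.normSq (x j)) := by
        intro i _
        rw [show (volume : Measure (ℂ × (Fin n → ℂ))) = volume.prod volume from Measure.volume_eq_prod _ _]
        rw [integral_prod_mul (f := fun z : ℂ =>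
            (Complex.normSq z ^ i * Real.exp (-α * Complex.normSq z)) * (m.choose i))
          (g := fun x : Fin n → ℂ => (∑ j, Complex.normSq (x j)) ^ (m-i) *
            Real.exp (-α * ∑ j, Complex.normSq (x j)))]
        rw [integral_mul_const, intC_val i hα]
      rw [Finset.sum_congr rfl hval]
      rcases Nat.eq_zero_or_pos n with rfl | hn
      · -- n = 0 : the inner integral is over `Fin 0 → ℂ`, a one-point space
        have h0 : ∀ i : ℕ, ∫ x : Fin 0 → ℂ, (∑ j, Complex.normSq (x j)) ^ (m-i) *
            Real.exp (-α * ∑ j, Complex.normSq (x j)) = (0:ℝ) ^ (m-i) := by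
          intro i
          have : (fun x : Fin 0 → ℂ => (∑ j, Complex.normSq (x j)) ^ (m-i) *
              Real.exp (-α * ∑ j, Complex.normSq (x j))) = fun _ => (0:ℝ) ^ (m-i) := by
            funext x
            simp
          rw [this, integral_const, volume_pi, measureReal_def, Measure.pi_empty_univ]
          simp
        simp_rw [h0]
        rw [Finset.sum_eq_single_of_mem m (Finset.self_mem_range_succ m)]
        · simp only [Nat.sub_self, pow_zero, mul_one, Nat.choose_self, Nat.cast_one]
          simp only [Nat.add_sub_cancel]
          norm_num
          ring
        · intro i hi hne
          have him : i < m := by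
            have := Finset.mem_range.mp hi
            omega
          rw [zero_pow (by omega : m - i ≠ 0)]
          ring
      · -- n ≥ 1 : use the induction hypothesis
        have hval2 : ∀ i ∈ range (m+1),
            (π * i.factorial / α ^ (i+1) * (m.choose i)) *
              ∫ x : Fin n → ℂ, (∑ j, Complex.normSq (x j)) ^ (m-i) *
                Real.exp (-α * ∑ j, Complex.normSq (x j))
            = π ^ (n+1) / α ^ (n+1+m) *
              ((m.choose i : ℝ) * i.factorial * (((m-i)+n-1).factorial / (n-1).factorial)) := by
          intro i hi
          have him : i ≤ m := Nat.lt_succ_iff.mp (Finset.mem_range.mp hi)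
          rw [(ih (m-i)).2 hn]
          have hα' : α ≠ 0 := ne_of_gt hα
          rw [show n+(m-i) = n+m-i by omega]
          have hpow : α ^ (i+1) * α ^ (n+m-i) = α ^ (n+1+m) := by
            rw [← pow_add, show i+1+(n+m-i) = n+1+m by omega]
          field_simp
          rw [← hpow]
          ring
        rw [Finset.sum_congr rfl hval2, ← Finset.mul_sum, realstick n m hn]
        rw [show m+(n+1)-1 = m+n by omega, show n+1-1 = n by omega]

theorem Phi_val (n k : ℕ) (hn : 1 ≤ n) (lam : ℝ) (hlam : lam ≠ 0) :
    Integrable (fun u : Fin n → ℂ => (laguerreFun n k lam u)^2) ∧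
    ∫ u : Fin n → ℂ, (laguerreFun n k lam u)^2
      = (2*π/|lam|)^n * ((k+n-1).factorial / (k.factorial * (n-1).factorial)) := by
  obtain ⟨δ, rfl⟩ : ∃ δ, n = δ + 1 := ⟨n-1, by omega⟩
  set α : ℝ := |lam|/2 with hαdef
  have hα : 0 < α := by
    have : 0 < |lam| := abs_pos.mpr hlam
    positivity
  have h2 : π/α = 2*π/|lam| := by
    rw [hαdef]
    have : |lam| ≠ 0 := abs_ne_zero.mpr hlam
    field_simp
  have hlam2 : |lam| = 2*α := by rw [hαdef]; field_simp
  clear_value α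
  set coef : ℕ → ℝ := fun j => (-1:ℝ)^j * ((k+δ).choose (k-j)) / j.factorial with hcoef
  -- pointwise expansion
  have hpt : ∀ u : Fin (δ+1) → ℂ,
      (laguerreFun (δ+1) k lam u)^2
        = ∑ a ∈ range (k+1), ∑ b ∈ range (k+1),
            (coef a * coef b * α^(a+b)) *
              ((∑ j, Complex.normSq (u j))^(a+b) *
                Real.exp (-α * ∑ j, Complex.normSq (u j))) := by
    intro u
    set s : ℝ := ∑ j, Complex.normSq (u j) with hs
    have h1 : laguerreFun (δ+1) k lam u
        = (∑ a ∈ range (k+1), coef a * (α*s)^a) * Real.exp (-(1/2) * α * s) := by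
      rw [laguerreFun, laguerrePoly]
      have e0 : normSqCn u = s := rfl
      rw [e0, show (δ+1) - 1 = δ by omega]
      have e1 : (1/2 : ℝ) * |lam| * s = α * s := by rw [hlam2]; ring
      have e2 : (-(1/4) : ℝ) * |lam| * s = -(1/2) * α * s := by rw [hlam2]; ring
      rw [e1, e2]
      congr 1
      refine Finset.sum_congr rfl fun a _ => ?_
      rw [hcoef]
      ring
    rw [h1]
    rw [pow_two]
    have e3 : ∀ x y : ℝ, (x * Real.exp (-(1/2) * α * s)) * (y * Real.exp (-(1/2) * α * s))
        = (x*y) * Real.exp (-α * s) := by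
      intro x y
      rw [show -α * s = (-(1/2) * α * s) + (-(1/2) * α * s) by ring, Real.exp_add]
      ring
    rw [e3, Finset.sum_mul_sum]
    rw [Finset.sum_mul]
    refine Finset.sum_congr rfl fun a _ => ?_
    rw [Finset.sum_mul]
    refine Finset.sum_congr rfl fun b _ => ?_
    rw [mul_pow α s a, mul_pow α s b, pow_add α a b, pow_add s a b]
    ring
  have hint : Integrable (fun u : Fin (δ+1) → ℂ => (laguerreFun (δ+1) k lam u)^2) := by
    have : Integrable (fun u : Fin (δ+1) → ℂ =>
        ∑ a ∈ range (k+1), ∑ b ∈ range (k+1),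
          (coef a * coef b * α^(a+b)) *
            ((∑ j, Complex.normSq (u j))^(a+b) *
              Real.exp (-α * ∑ j, Complex.normSq (u j)))) := by
      refine integrable_finset_sum _ fun a _ => integrable_finset_sum _ fun b _ => ?_
      exact ((intCn α hα (δ+1) (a+b)).1).const_mul _
    exact this.congr (Filter.Eventually.of_forall fun u => (hpt u).symm)
  refine ⟨hint, ?_⟩
  calc ∫ u : Fin (δ+1) → ℂ, (laguerreFun (δ+1) k lam u)^2
      = ∫ u : Fin (δ+1) → ℂ, ∑ a ∈ range (k+1), ∑ b ∈ range (k+1),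
          (coef a * coef b * α^(a+b)) *
            ((∑ j, Complex.normSq (u j))^(a+b) *
              Real.exp (-α * ∑ j, Complex.normSq (u j))) := by
        exact integral_congr_ae (Filter.Eventually.of_forall fun u => hpt u)
    _ = ∑ a ∈ range (k+1), ∑ b ∈ range (k+1),
          (coef a * coef b * α^(a+b)) *
            ∫ u : Fin (δ+1) → ℂ, ((∑ j, Complex.normSq (u j))^(a+b) *
              Real.exp (-α * ∑ j, Complex.normSq (u j))) := by
        rw [integral_finset_sum _ (fun a _ => integrable_finset_sum _ fun b _ =>
          ((intCn α hα (δ+1) (a+b)).1).const_mul _)]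
        refine Finset.sum_congr rfl fun a _ => ?_
        rw [integral_finset_sum _ (fun b _ => ((intCn α hα (δ+1) (a+b)).1).const_mul _)]
        exact Finset.sum_congr rfl fun b _ => integral_const_mul _ _
    _ = ∑ a ∈ range (k+1), ∑ b ∈ range (k+1),
          (π/α)^(δ+1) / (δ.factorial : ℝ) *
            ((coef a * coef b) * ((a+b+δ).factorial : ℝ)) := by
        refine Finset.sum_congr rfl fun a _ => Finset.sum_congr rfl fun b _ => ?_
        rw [(intCn α hα (δ+1) (a+b)).2 (by omega)]
        have hα' : α ≠ 0 := ne_of_gt hα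
        rw [show (a+b) + (δ+1) - 1 = a+b+δ by omega, show (δ+1) - 1 = δ by omega]
        rw [div_pow, pow_add α (δ+1) (a+b)]
        have h3 : (δ.factorial : ℝ) ≠ 0 := Nat.cast_ne_zero.2 (Nat.factorial_ne_zero _)
        field_simp
    _ = (π/α)^(δ+1) / (δ.factorial : ℝ) *
          ∑ a ∈ range (k+1), ∑ b ∈ range (k+1),
            ((coef a * coef b) * ((a+b+δ).factorial : ℝ)) := by
        rw [Finset.mul_sum]
        exact Finset.sum_congr rfl fun a _ => by rw [Finset.mul_sum]
    _ = (π/α)^(δ+1) / (δ.factorial : ℝ) * ((k+δ).factorial / k.factorial) := by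
        rw [← comb k δ]
    _ = (2*π/|lam|)^(δ+1) *
          ((k+(δ+1)-1).factorial / (k.factorial * ((δ+1)-1).factorial)) := by
        rw [h2, show k+(δ+1)-1 = k+δ by omega, show (δ+1)-1 = δ by omega]
        have h3 : (δ.factorial : ℝ) ≠ 0 := Nat.cast_ne_zero.2 (Nat.factorial_ne_zero _)
        have h4 : (k.factorial : ℝ) ≠ 0 := Nat.cast_ne_zero.2 (Nat.factorial_ne_zero _)
        field_simp

theorem laguerreFun_continuous (n k : ℕ) (lam : ℝ) : Continuous (laguerreFun n k lam) := by
  have hs : Continuous (fun z : Fin n → ℂ => normSqCn z) := by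
    unfold normSqCn
    exact continuous_finset_sum _ fun j _ => Complex.continuous_normSq.comp (continuous_apply j)
  have hp : Continuous (laguerrePoly k (n-1)) := by
    unfold laguerrePoly
    exact continuous_finset_sum _ fun j _ =>
      ((continuous_const.mul (continuous_pow j)).div_const _)
  unfold laguerreFun
  exact (hp.comp ((continuous_const.mul hs))).mul
    ((continuous_const.mul hs).rexp)

theorem Phi_lintegral (n k : ℕ) (hn : 1 ≤ n) (lam : ℝ) (hlam : lam ≠ 0) :
    ∫⁻ u : Fin n → ℂ, (‖laguerreFun n k lam u‖₊ : ℝ≥0∞) ^ (2:ℝ)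
      = ENNReal.ofReal
          ((2*π/|lam|)^n * ((k+n-1).factorial / (k.factorial * (n-1).factorial))) := by
  have h1 : ∀ u : Fin n → ℂ, (‖laguerreFun n k lam u‖₊ : ℝ≥0∞)^(2:ℝ)
      = ENNReal.ofReal ((laguerreFun n k lam u)^2) := by
    intro u
    rw [← enorm_eq_nnnorm, Real.enorm_eq_ofReal_abs,
      ENNReal.ofReal_rpow_of_nonneg (abs_nonneg _) (by norm_num : (0:ℝ) ≤ 2)]
    congr 1
    rw [show ((2:ℝ)) = ((2:ℕ):ℝ) by norm_num, Real.rpow_natCast, sq_abs]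
  simp_rw [h1]
  rw [← ofReal_integral_eq_lintegral_ofReal (Phi_val n k hn lam hlam).1
    (Filter.Eventually.of_forall fun u => sq_nonneg _), (Phi_val n k hn lam hlam).2]

end StrichartzAux

/-- Uniform `L¹ → L^{(2,∞)}` bound for the Strichartz Fourier transform:
for every point of the Heisenberg fan,
`|λ|^{n/2} ‖F f(λ,k,·)‖_{L²(ℂⁿ)} ≤ (2π)^{n/2} ‖f‖_{L¹(ℍⁿ)}`. -/
theorem strichartz_L1_bound (n : ℕ) (hn : 1 ≤ n) (f : Heis n → ℂ)
    (hf : Integrable f (volume : Measure (Heis n)))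
    (lam : ℝ) (hlam : lam ≠ 0) (k : ℕ) :
    ENNReal.ofReal (|lam| ^ ((n : ℝ) / 2)) *
        (∫⁻ w : Fin n → ℂ, (‖SFT n f lam k w‖₊ : ℝ≥0∞) ^ 2) ^ ((1 : ℝ) / 2)
      ≤ ENNReal.ofReal ((2 * π) ^ ((n : ℝ) / 2)) *
          eLpNorm f 1 (volume : Measure (Heis n)) := by

  classical
  -- replace `f` by a strongly measurable representative `g`
  set g := hf.1.mk f with hgdef
  have hgm : StronglyMeasurable g := hf.1.stronglyMeasurable_mk
  have hfg : f =ᵐ[volume] g := hf.1.ae_eq_mk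
  have hg : Integrable g := hf.congr hfg
  have hSFTeq : ∀ w, SFT n f lam k w = SFT n g lam k w := by
    intro w
    unfold SFT
    congr 1
    refine integral_congr_ae ?_
    filter_upwards [hfg] with x hx
    rw [hx]
  rw [eLpNorm_congr_ae hfg]
  simp_rw [hSFTeq]
  -- notation
  set c := cnk n k with hc
  have hfac1 : (0:ℝ) < k.factorial := by exact_mod_cast k.factorial_pos
  have hfac2 : (0:ℝ) < (n-1).factorial := by exact_mod_cast (n-1).factorial_pos
  have hfac3 : (0:ℝ) < (k+n-1).factorial := by exact_mod_cast (k+n-1).factorial_pos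
  have hc0 : 0 < c := div_pos (mul_pos hfac1 hfac2) hfac3
  have hc1 : c ≤ 1 := by
    rw [hc, cnk, div_le_one hfac3]
    have hdvd := Nat.factorial_mul_factorial_dvd_factorial_add k (n-1)
    have hle : k.factorial * (n-1).factorial ≤ (k + (n-1)).factorial :=
      Nat.le_of_dvd (Nat.factorial_pos _) hdvd
    rw [show k + n - 1 = k + (n-1) by omega]
    exact_mod_cast hle
  set L := ∫⁻ x : Heis n, (‖g x‖₊ : ℝ≥0∞) with hLdef
  have hLfin : L ≠ ⊤ := hg.2.ne
  have hLnorm : eLpNorm g 1 (volume : Measure (Heis n)) = L := by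
    rw [eLpNorm_one_eq_lintegral_enorm]; rfl
  set Ψ : (Fin n → ℂ) → ℝ≥0∞ := fun u => (‖laguerreFun n k lam u‖₊ : ℝ≥0∞) with hΨdef
  have hΨm : Measurable Ψ :=
    (laguerreFun_continuous n k lam).measurable.nnnorm.coe_nnreal_ennreal
  have hgm' : Measurable (fun x : Heis n => (‖g x‖₊ : ℝ≥0∞)) := hgm.measurable.enorm
  have hmapw : ∀ w : Fin n → ℂ, Measurable (fun x : Heis n => -x.1 + w) := by
    intro w
    exact (measurable_fst.neg.add_const w)
  -- norm of the eFun factor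
  have hexp1 : ∀ t : ℝ, ‖Complex.exp (Complex.I * lam * t)‖₊ = 1 := by
    intro t
    apply NNReal.eq
    rw [coe_nnnorm, NNReal.coe_one, Complex.norm_exp]
    have : (Complex.I * lam * t).re = 0 := by
      simp [Complex.mul_re, Complex.mul_im]
    rw [this, Real.exp_zero]
  have key1 : ∀ (w : Fin n → ℂ) (x : Heis n),
      (‖g x * eFun n k lam (Hmul (Hinv x) (w, (0:ℝ)))‖₊ : ℝ≥0∞)
        = (‖g x‖₊ : ℝ≥0∞) * Ψ (-x.1 + w) := by
    intro w x
    rw [nnnorm_mul, ENNReal.coe_mul]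
    congr 1
    have hfst : (Hmul (Hinv x) (w, (0:ℝ))).1 = -x.1 + w := rfl
    rw [eFun, nnnorm_mul, hexp1, one_mul, Complex.nnnorm_real, hfst]
  -- Step A: pointwise bound on the Fourier transform
  have hA : ∀ w : Fin n → ℂ, (‖SFT n g lam k w‖₊ : ℝ≥0∞)
      ≤ ENNReal.ofReal c * ∫⁻ x : Heis n, (‖g x‖₊ : ℝ≥0∞) * Ψ (-x.1 + w) := by
    intro w
    have e0 : SFT n g lam k w
        = (c:ℂ) * ∫ x : Heis n, g x * eFun n k lam (Hmul (Hinv x) (w, (0:ℝ))) := rfl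
    rw [e0, nnnorm_mul, ENNReal.coe_mul, Complex.nnnorm_real,
      ← enorm_eq_nnnorm, Real.enorm_eq_ofReal hc0.le]
    refine mul_le_mul_right ?_ _
    refine le_trans (enorm_integral_le_lintegral_enorm _) (le_of_eq ?_)
    exact lintegral_congr fun x => key1 w x
  -- Step B: Cauchy-Schwarz in x
  have conj22 : Real.HolderConjugate 2 2 := ⟨by norm_num, by norm_num, by norm_num⟩
  have hB : ∀ w : Fin n → ℂ,
      ∫⁻ x : Heis n, (‖g x‖₊ : ℝ≥0∞) * Ψ (-x.1 + w)
        ≤ L ^ ((1:ℝ)/2) *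
          (∫⁻ x : Heis n, (‖g x‖₊ : ℝ≥0∞) * Ψ (-x.1 + w) ^ (2:ℝ)) ^ ((1:ℝ)/2) := by
    intro w
    set F1 : Heis n → ℝ≥0∞ := fun x => (‖g x‖₊ : ℝ≥0∞) ^ ((1:ℝ)/2) with hF1
    set F2 : Heis n → ℝ≥0∞ :=
      fun x => (‖g x‖₊ : ℝ≥0∞) ^ ((1:ℝ)/2) * Ψ (-x.1 + w) with hF2
    have hmF1 : AEMeasurable F1 volume := (hgm'.pow_const _).aemeasurable
    have hmF2 : AEMeasurable F2 volume :=
      ((hgm'.pow_const _).mul (hΨm.comp (hmapw w))).aemeasurable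
    have hhold := ENNReal.lintegral_mul_le_Lp_mul_Lq volume conj22 hmF1 hmF2
    have e1 : ∀ x : Heis n, (F1 * F2) x = (‖g x‖₊ : ℝ≥0∞) * Ψ (-x.1 + w) := by
      intro x
      have : ((‖g x‖₊ : ℝ≥0∞) ^ ((1:ℝ)/2)) * ((‖g x‖₊ : ℝ≥0∞) ^ ((1:ℝ)/2))
          = (‖g x‖₊ : ℝ≥0∞) := by
        rw [← ENNReal.rpow_add_of_nonneg _ _ (by norm_num) (by norm_num)]
        norm_num
      calc (F1 * F2) x = (((‖g x‖₊ : ℝ≥0∞) ^ ((1:ℝ)/2)) * ((‖g x‖₊ : ℝ≥0∞) ^ ((1:ℝ)/2)))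
            * Ψ (-x.1 + w) := by
            simp only [Pi.mul_apply, hF1, hF2]
            ring
        _ = (‖g x‖₊ : ℝ≥0∞) * Ψ (-x.1 + w) := by rw [this]
    have e2 : ∀ x : Heis n, F1 x ^ (2:ℝ) = (‖g x‖₊ : ℝ≥0∞) := by
      intro x
      rw [hF1, ← ENNReal.rpow_mul]
      norm_num
    have e3 : ∀ x : Heis n, F2 x ^ (2:ℝ)
        = (‖g x‖₊ : ℝ≥0∞) * Ψ (-x.1 + w) ^ (2:ℝ) := by
      intro x
      rw [hF2, ENNReal.mul_rpow_of_nonneg _ _ (by norm_num : (0:ℝ) ≤ 2),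
        ← ENNReal.rpow_mul]
      norm_num
    simp_rw [e1, e2, e3] at hhold
    simpa using hhold
  -- Step C: Tonelli and translation invariance
  set Φl : ℝ≥0∞ := ENNReal.ofReal
    ((2*π/|lam|)^n * ((k+n-1).factorial / (k.factorial * (n-1).factorial))) with hΦl
  have hΦfin : Φl ≠ ⊤ := ENNReal.ofReal_ne_top
  have htrans : ∀ x : Heis n, ∫⁻ w : Fin n → ℂ, Ψ (-x.1 + w) ^ (2:ℝ) = Φl := by
    intro x
    have := lintegral_add_left_eq_self (μ := (volume : Measure (Fin n → ℂ)))
      (fun u => Ψ u ^ (2:ℝ)) (-x.1)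
    rw [this, hΦl, hΨdef]
    exact Phi_lintegral n k hn lam hlam
  have hC : ∫⁻ w : Fin n → ℂ, ∫⁻ x : Heis n, (‖g x‖₊ : ℝ≥0∞) * Ψ (-x.1 + w) ^ (2:ℝ)
      = L * Φl := by
    have hjm : Measurable (Function.uncurry
        (fun (w : Fin n → ℂ) (x : Heis n) => (‖g x‖₊ : ℝ≥0∞) * Ψ (-x.1 + w) ^ (2:ℝ))) := by
      have hm1 : Measurable (fun p : (Fin n → ℂ) × Heis n => (‖g p.2‖₊ : ℝ≥0∞)) :=
        hgm'.comp measurable_snd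
      have hm2 : Measurable (fun p : (Fin n → ℂ) × Heis n => -p.2.1 + p.1) :=
        ((measurable_fst.comp measurable_snd).neg.add measurable_fst)
      exact hm1.mul ((hΨm.comp hm2).pow_const _)
    rw [lintegral_lintegral_swap hjm.aemeasurable]
    have e4 : ∀ x : Heis n, ∫⁻ w : Fin n → ℂ, (‖g x‖₊ : ℝ≥0∞) * Ψ (-x.1 + w) ^ (2:ℝ)
        = (‖g x‖₊ : ℝ≥0∞) * Φl := by
      intro x
      rw [lintegral_const_mul' _ _ ENNReal.coe_ne_top, htrans x]
    simp_rw [e4]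
    rw [lintegral_mul_const' _ _ hΦfin]
  -- Put the steps together
  have main2 : ∫⁻ w : Fin n → ℂ, (‖SFT n g lam k w‖₊ : ℝ≥0∞) ^ (2:ℝ)
      ≤ (ENNReal.ofReal c) ^ (2:ℝ) * (L * (L * Φl)) := by
    have step1 : ∀ w : Fin n → ℂ, (‖SFT n g lam k w‖₊ : ℝ≥0∞) ^ (2:ℝ)
        ≤ (ENNReal.ofReal c) ^ (2:ℝ) *
          (L * ∫⁻ x : Heis n, (‖g x‖₊ : ℝ≥0∞) * Ψ (-x.1 + w) ^ (2:ℝ)) := by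
      intro w
      have h1 : (‖SFT n g lam k w‖₊ : ℝ≥0∞)
          ≤ ENNReal.ofReal c * (L ^ ((1:ℝ)/2) *
            (∫⁻ x : Heis n, (‖g x‖₊ : ℝ≥0∞) * Ψ (-x.1 + w) ^ (2:ℝ)) ^ ((1:ℝ)/2)) :=
        le_trans (hA w) (mul_le_mul_right (hB w) _)
      have h2 := ENNReal.rpow_le_rpow h1 (by norm_num : (0:ℝ) ≤ 2)
      refine le_trans h2 (le_of_eq ?_)
      rw [ENNReal.mul_rpow_of_nonneg _ _ (by norm_num : (0:ℝ) ≤ 2),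
        ENNReal.mul_rpow_of_nonneg _ _ (by norm_num : (0:ℝ) ≤ 2),
        ← ENNReal.rpow_mul, ← ENNReal.rpow_mul]
      norm_num
    refine le_trans (lintegral_mono step1) (le_of_eq ?_)
    have e5 : ∀ w : Fin n → ℂ,
        (ENNReal.ofReal c) ^ (2:ℝ) *
          (L * ∫⁻ x : Heis n, (‖g x‖₊ : ℝ≥0∞) * Ψ (-x.1 + w) ^ (2:ℝ))
        = ((ENNReal.ofReal c) ^ (2:ℝ) * L) *
          ∫⁻ x : Heis n, (‖g x‖₊ : ℝ≥0∞) * Ψ (-x.1 + w) ^ (2:ℝ) := by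
      intro w
      exact (mul_assoc _ _ _).symm
    simp_rw [e5]
    rw [lintegral_const_mul' _ _ (ENNReal.mul_ne_top
      (ENNReal.rpow_ne_top_of_nonneg (by norm_num) ENNReal.ofReal_ne_top) hLfin), hC]
    rw [mul_assoc]
  -- final scalar computation
  have hpow2 : ∀ x : ℝ≥0∞, x ^ (2:ℕ) = x ^ (2:ℝ) := by
    intro x
    rw [← ENNReal.rpow_natCast]
    norm_num
  simp_rw [hpow2]
  have hhalf := ENNReal.rpow_le_rpow main2 (by norm_num : (0:ℝ) ≤ 1/2)
  have e6 : ((ENNReal.ofReal c) ^ (2:ℝ) * (L * (L * Φl))) ^ ((1:ℝ)/2)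
      = (ENNReal.ofReal c * L) * Φl ^ ((1:ℝ)/2) := by
    have : (ENNReal.ofReal c) ^ (2:ℝ) * (L * (L * Φl))
        = (ENNReal.ofReal c * L) ^ (2:ℝ) * Φl := by
      rw [ENNReal.mul_rpow_of_nonneg _ _ (by norm_num : (0:ℝ) ≤ 2)]
      have hLL : L ^ (2:ℝ) = L * L := by
        rw [show (2:ℝ) = ((2:ℕ):ℝ) by norm_num, ENNReal.rpow_natCast, sq]
      rw [hLL, ← mul_assoc L L Φl, ← mul_assoc]
    rw [this, ENNReal.mul_rpow_of_nonneg _ _ (by norm_num : (0:ℝ) ≤ 1/2),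
      ← ENNReal.rpow_mul]
    norm_num
  rw [hLnorm]
  calc ENNReal.ofReal (|lam| ^ ((n : ℝ) / 2)) *
        (∫⁻ w : Fin n → ℂ, (‖SFT n g lam k w‖₊ : ℝ≥0∞) ^ (2:ℝ)) ^ ((1:ℝ)/2)
      ≤ ENNReal.ofReal (|lam| ^ ((n : ℝ) / 2)) *
          ((ENNReal.ofReal c * L) * Φl ^ ((1:ℝ)/2)) := by
        refine mul_le_mul_right ?_ _
        rw [← e6]
        exact hhalf
    _ = (ENNReal.ofReal (|lam| ^ ((n : ℝ) / 2)) * ENNReal.ofReal c * Φl ^ ((1:ℝ)/2)) * L := by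
        rw [mul_right_comm (ENNReal.ofReal c) L (Φl ^ ((1:ℝ)/2)), ← mul_assoc, ← mul_assoc]
    _ ≤ ENNReal.ofReal ((2 * π) ^ ((n : ℝ) / 2)) * L := by
        refine mul_le_mul_left ?_ _
        -- compute the scalar
        have hD : Φl ^ ((1:ℝ)/2) = ENNReal.ofReal
            ((((2*π/|lam|)^n * ((k+n-1).factorial /
              (k.factorial * (n-1).factorial)))) ^ ((1:ℝ)/2)) := by
          rw [hΦl, ENNReal.ofReal_rpow_of_nonneg ?_ (by norm_num : (0:ℝ) ≤ 1/2)]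
          have h2π : (0:ℝ) < 2*π := by positivity
          have := abs_pos.mpr hlam
          positivity
        rw [hD, ← ENNReal.ofReal_mul (by positivity), ← ENNReal.ofReal_mul ?hnn]
        case hnn =>
          have := abs_pos.mpr hlam
          positivity
        refine ENNReal.ofReal_le_ofReal ?_
        -- real inequality
        have hlamp : (0:ℝ) < |lam| := abs_pos.mpr hlam
        have h2π : (0:ℝ) < 2*π := by positivity
        have hDc : (2*π/|lam|)^n * ((k+n-1).factorial /
            (k.factorial * (n-1).factorial)) = (2*π/|lam|)^n / c := by
          rw [hc, cnk]
          field_simp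
        rw [hDc]
        have hstep : ((2*π/|lam|)^n / c) ^ ((1:ℝ)/2)
            = (2*π) ^ ((n:ℝ)/2) / (|lam| ^ ((n:ℝ)/2) * c ^ ((1:ℝ)/2)) := by
          rw [Real.div_rpow (by positivity) hc0.le,
            show ((2*π/|lam|)^n : ℝ) = (2*π/|lam|) ^ ((n:ℕ):ℝ) from (Real.rpow_natCast _ n).symm,
            ← Real.rpow_mul (by positivity),
            show ((n:ℕ):ℝ) * ((1:ℝ)/2) = (n:ℝ)/2 by push_cast; ring,
            Real.div_rpow (by positivity) hlamp.le]
          field_simp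
        rw [hstep]
        have hcsqrt : (0:ℝ) < c ^ ((1:ℝ)/2) := Real.rpow_pos_of_pos hc0 _
        have h1 : (0:ℝ) < |lam| ^ ((n:ℝ)/2) := Real.rpow_pos_of_pos hlamp _
        have heq : |lam| ^ ((n:ℝ)/2) * c *
            ((2*π) ^ ((n:ℝ)/2) / (|lam| ^ ((n:ℝ)/2) * c ^ ((1:ℝ)/2)))
            = (2*π) ^ ((n:ℝ)/2) * (c / c ^ ((1:ℝ)/2)) := by
          field_simp
        have hdiv : c / c ^ ((1:ℝ)/2) = c ^ ((1:ℝ)/2) := by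
          nth_rewrite 1 [show c = c ^ ((1:ℝ)) from (Real.rpow_one c).symm]
          rw [← Real.rpow_sub hc0]
          norm_num
        rw [heq, hdiv]
        calc (2*π) ^ ((n:ℝ)/2) * c ^ ((1:ℝ)/2)
            ≤ (2*π) ^ ((n:ℝ)/2) * 1 := by
              refine mul_le_mul_of_nonneg_left ?_ (by positivity)
              exact Real.rpow_le_one hc0.le hc1 (by norm_num)
          _ = (2*π) ^ ((n:ℝ)/2) := mul_one _


end
end
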